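/- arXiv:2404.18014 — 2 statements merged into one kernel-verified Lean document; each statement's English description precedes it below -/
import Mathlib

section
/- Let G be a finite simple graph and let f be an embedding of G into a layer of the hypercube Q_n (an isomorphism from G onto a subgraph of the k-th layer of Q_n, for some k). Define an edge-labelling χ : E(G) → ℕ by letting χ(xy) be the direction of the edge f(x)f(y), i.e., the unique coordinate in which f(x) and f(y) differ. Then χ is a layered edge-labelling: it is cubical, and for any two edges of G having the same label c, every path in G between these two edges that contains no edge of label c has an even number of edges. -/
open SimpleGraph

/-- The number of ones (`true` coordinates) of a vertex of the hypercube. -/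
def onesCount {n : ℕ} (x : Fin n → Bool) : ℕ := (Finset.univ.filter fun i => x i = true).card

/-- The `n`-dimensional hypercube graph `Q_n`. -/
def cube (n : ℕ) : SimpleGraph (Fin n → Bool) where
  Adj x y := hammingDist x y = 1
  symm := ⟨by intro x y h; rwa [hammingDist_comm]⟩
  loopless := ⟨by intro x h; simp [hammingDist_self] at h⟩

/-- The vertex set of the `k`-th layer of `Q_n`. -/
def layerSet (n k : ℕ) : Set (Fin n → Bool) := {x | onesCount x = k ∨ onesCount x = k + 1}

/-- The `k`-th layer of `Q_n`: the subgraph induced on vertices with `k` or `k+1` ones. -/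
def layer (n k : ℕ) : SimpleGraph (layerSet n k) := (cube n).induce (layerSet n k)

/-- `f` is an isomorphism from `G` onto a subgraph of `H`. -/
def IsEmbedding {V W : Type*} (G : SimpleGraph V) (H : SimpleGraph W) (f : V → W) : Prop :=
  Function.Injective f ∧ ∀ u v, G.Adj u v → H.Adj (f u) (f v)

/-- `f` is an isomorphism from `G` onto an induced subgraph of `H`. -/
def IsInducedEmbedding {V W : Type*} (G : SimpleGraph V) (H : SimpleGraph W) (f : V → W) : Prop :=
  Function.Injective f ∧ ∀ u v, G.Adj u v ↔ H.Adj (f u) (f v)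

/-- `G` is cubical: isomorphic to a subgraph of some hypercube. -/
def IsCubical {V : Type*} (G : SimpleGraph V) : Prop :=
  ∃ (n : ℕ) (f : V → (Fin n → Bool)), IsEmbedding G (cube n) f

/-- `G` is layered: isomorphic to a subgraph of some layer of some hypercube. -/
def IsLayered {V : Type*} (G : SimpleGraph V) : Prop :=
  ∃ (n k : ℕ) (f : V → layerSet n k), IsEmbedding G (layer n k) f

/-- A cubical edge-labelling. -/
def IsCubicalLabelling {V : Type*} (G : SimpleGraph V) (χ : Sym2 V → ℕ) : Prop :=
  (∀ (u : V) (w : G.Walk u u), w.IsCycle → ∀ c : ℕ, Even ((w.edges.map χ).count c)) ∧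
  (∀ (u v : V) (w : G.Walk u v), w.IsPath → 0 < w.length →
      ∃ c : ℕ, Odd ((w.edges.map χ).count c))

/-- A layered edge-labelling. -/
def IsLayeredLabelling {V : Type*} (G : SimpleGraph V) (χ : Sym2 V → ℕ) : Prop :=
  IsCubicalLabelling G χ ∧
  ∀ e₁ ∈ G.edgeSet, ∀ e₂ ∈ G.edgeSet, χ e₁ = χ e₂ →
    ∀ u v, u ∈ e₁ → v ∈ e₂ →
      ∀ (w : G.Walk u v), w.IsPath → (∀ e ∈ w.edges, χ e ≠ χ e₁) → Even w.length

/-- `(G, P)` is `t`-distance-separating. -/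
def DistSeparating {V : Type*} (G : SimpleGraph V) (P : Set (Sym2 V)) (t : ℕ) : Prop :=
  (∃ (n : ℕ) (f : V → (Fin n → Bool)), IsEmbedding G (cube n) f ∧
      ∀ x y : V, s(x, y) ∈ P → hammingDist (f x) (f y) = t) ∧
  (∀ (n k : ℕ) (g : V → layerSet n k), IsEmbedding G (layer n k) g →
      ∃ x y : V, s(x, y) ∈ P ∧ hammingDist (g x).1 (g y).1 = t + 2)
section Aux

variable {n k : ℕ}

lemma aux_onesCount_identity (x y : Fin n → Bool) (i : Fin n)
    (hxy : ∀ j, j ≠ i → x j = y j) :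
    onesCount x + (if y i = true then 1 else 0)
      = onesCount y + (if x i = true then 1 else 0) := by
  unfold onesCount
  rw [Finset.card_filter, Finset.card_filter,
    ← Finset.sum_erase_add _ _ (Finset.mem_univ i),
    ← Finset.sum_erase_add _ _ (Finset.mem_univ i)]
  have h : ∀ j ∈ Finset.univ.erase i,
      (if x j = true then 1 else 0) = (if y j = true then 1 else 0) := by
    intro j hj
    rw [hxy j (Finset.mem_erase.mp hj).1]
  rw [Finset.sum_congr rfl h]
  ring

lemma aux_eq_of_ne_dir (x y : Fin n → Bool) (i : Fin n)
    (hd : hammingDist x y = 1) (hi : x i ≠ y i) :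
    ∀ j, j ≠ i → x j = y j := by
  intro j hj
  by_contra hne
  have h2 : ({i, j} : Finset (Fin n)) ⊆ Finset.univ.filter (fun a => x a ≠ y a) := by
    intro a ha
    simp only [Finset.mem_insert, Finset.mem_singleton] at ha
    rcases ha with rfl | rfl <;> simp [hi, hne]
  have hle := Finset.card_le_card h2
  rw [Finset.card_insert_of_notMem (by simpa using Ne.symm hj),
    Finset.card_singleton] at hle
  rw [hammingDist] at hd
  omega

lemma aux_onesCount_endpoint (x y : Fin n → Bool) (i : Fin n)
    (hd : hammingDist x y = 1) (hi : x i ≠ y i)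
    (hx : onesCount x = k ∨ onesCount x = k + 1)
    (hy : onesCount y = k ∨ onesCount y = k + 1) :
    onesCount x = (if x i = true then k + 1 else k) := by
  have hident := aux_onesCount_identity x y i (aux_eq_of_ne_dir x y i hd hi)
  cases h1 : x i <;> cases h2 : y i <;> rw [h1, h2] at hi hident <;>
    simp_all <;> omega

variable {V : Type} (G : SimpleGraph V) (f : V → layerSet n k)
  (hf : IsEmbedding G (layer n k) f) (χ : Sym2 V → ℕ)
  (hχ : ∀ x y : V, G.Adj x y →
      ∃ i : Fin n, (i : ℕ) = χ s(x, y) ∧ (f x).1 i ≠ (f y).1 i)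

include hf hχ

lemma aux_coord_parity {u v : V} (w : G.Walk u v) (i : Fin n) :
    ((f u).1 i = (f v).1 i) ↔ Even ((w.edges.map χ).count (i : ℕ)) := by
  induction w with
  | nil => simp
  | @cons u b v h p ih =>
    have hd : hammingDist (f u).1 (f b).1 = 1 := hf.2 u b h
    obtain ⟨j, hj1, hj2⟩ := hχ u b h
    rw [Walk.edges_cons, List.map_cons, List.count_cons]
    by_cases hc : χ s(u, b) = (i : ℕ)
    · have hji : i = j := Fin.val_injective (by rw [← hc, hj1])
      subst hji
      have hiff : ((f u).1 i = (f v).1 i) ↔ ¬ ((f b).1 i = (f v).1 i) := by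
        revert hj2
        cases (f u).1 i <;> cases (f b).1 i <;> cases (f v).1 i <;> simp
      rw [hiff, ih]
      simp [hc, Nat.even_add_one]
    · have hji : j ≠ i := by
        intro hji; exact hc (by rw [← hj1, hji])
      have heq : (f u).1 i = (f b).1 i :=
        aux_eq_of_ne_dir (f u).1 (f b).1 j hd hj2 i (fun hij => hji hij.symm)
      rw [heq, ih]
      simp [hc]

lemma aux_parity_ne_of_adj {u v : V} (h : G.Adj u v) :
    onesCount (f u).1 % 2 ≠ onesCount (f v).1 % 2 := by
  have hd : hammingDist (f u).1 (f v).1 = 1 := hf.2 u v h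
  obtain ⟨j, hj1, hj2⟩ := hχ u v h
  have hident := aux_onesCount_identity (f u).1 (f v).1 j
    (aux_eq_of_ne_dir (f u).1 (f v).1 j hd hj2)
  cases h1 : (f u).1 j <;> cases h2 : (f v).1 j <;>
    rw [h1, h2] at hj2 hident <;> simp_all <;> omega

lemma aux_length_parity {u v : V} (w : G.Walk u v) :
    Even w.length ↔ onesCount (f u).1 % 2 = onesCount (f v).1 % 2 := by
  induction w with
  | nil => simp
  | @cons u b v h p ih =>
    have hne := aux_parity_ne_of_adj G f hf χ hχ h
    rw [Walk.length_cons, Nat.even_add_one, ih]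
    omega

end Aux

/-- The edge-labelling induced by an embedding into a layer of a
hypercube, assigning to each edge the direction of its image, is layered. -/
theorem labelling_of_layer_embedding_isLayered {V : Type} [Fintype V]
    (G : SimpleGraph V) (n k : ℕ) (f : V → layerSet n k)
    (hf : IsEmbedding G (layer n k) f) (χ : Sym2 V → ℕ)
    (hχ : ∀ x y : V, G.Adj x y →
        ∃ i : Fin n, (i : ℕ) = χ s(x, y) ∧ (f x).1 i ≠ (f y).1 i) :
    IsLayeredLabelling G χ := by
  constructor
  · constructor
    · -- cycles: every label appears an even number of times
      intro u w _hw c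
      by_cases hc : c ∈ w.edges.map χ
      · obtain ⟨e, he, hec⟩ := List.mem_map.mp hc
        have heG : e ∈ G.edgeSet := w.edges_subset_edgeSet he
        induction e using Sym2.ind with
        | _ a b =>
          have hadj : G.Adj a b := heG
          obtain ⟨i, hi1, _⟩ := hχ a b hadj
          have hci : c = (i : ℕ) := by rw [← hec, ← hi1]
          rw [hci]
          exact (aux_coord_parity G f hf χ hχ w i).mp rfl
      · rw [List.count_eq_zero.mpr hc]; exact Even.zero
    · -- nonempty paths: some label appears an odd number of times
      intro u v w hw hlen
      have huv : u ≠ v := by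
        rintro rfl
        rw [Walk.isPath_iff_eq_nil] at hw
        subst hw; simp at hlen
      have hfuv : (f u).1 ≠ (f v).1 := by
        intro h
        exact huv (hf.1 (Subtype.ext h))
      obtain ⟨i, hi⟩ := Function.ne_iff.mp hfuv
      refine ⟨(i : ℕ), Nat.odd_iff.mpr ?_⟩
      have := (aux_coord_parity G f hf χ hχ w i).not.mp hi
      rw [Nat.even_iff] at this
      omega
  · -- layered condition
    intro e₁ he₁ e₂ he₂ hee u v hu hv w hw hwc
    obtain ⟨a, rfl⟩ := Sym2.mem_iff_exists.mp hu
    obtain ⟨b, rfl⟩ := Sym2.mem_iff_exists.mp hv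
    have hadj₁ : G.Adj u a := he₁
    have hadj₂ : G.Adj v b := he₂
    obtain ⟨i, hi1, hi2⟩ := hχ u a hadj₁
    obtain ⟨j, hj1, hj2⟩ := hχ v b hadj₂
    have hij : i = j := Fin.val_injective (by rw [hi1, hee, ← hj1])
    subst hij
    -- the i-th coordinate of f is constant along w
    have hcount : ((w.edges.map χ).count (i : ℕ)) = 0 := by
      apply List.count_eq_zero.mpr
      intro hmem
      obtain ⟨e, he, hec⟩ := List.mem_map.mp hmem
      exact hwc e he (by rw [hec, ← hi1])
    have hcoord : (f u).1 i = (f v).1 i := by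
      rw [aux_coord_parity G f hf χ hχ w i, hcount]; exact Even.zero
    -- onesCount at endpoints of direction-i edges
    have hocu : onesCount (f u).1 = (if (f u).1 i = true then k + 1 else k) :=
      aux_onesCount_endpoint (f u).1 (f a).1 i (hf.2 u a hadj₁) hi2 (f u).2 (f a).2
    have hocv : onesCount (f v).1 = (if (f v).1 i = true then k + 1 else k) :=
      aux_onesCount_endpoint (f v).1 (f b).1 i (hf.2 v b hadj₂) hj2 (f v).2 (f b).2
    rw [aux_length_parity G f hf χ hχ w, hocu, hocv, hcoord]
end

section
/- Let P6 be the path with vertices v0, v1, ..., v6 and edges e_i = v_i v_{i+1} for 0 ≤ i ≤ 5, and let χ : E(P6) → ℕ be any layered edge-labelling of P6. Then there exists some i with 0 ≤ i ≤ 2 such that the four labels χ(e_i), χ(e_{i+1}), χ(e_{i+2}), χ(e_{i+3}) are pairwise distinct. -/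
open SimpleGraph
open Fin.NatCast

lemma adj7 (a b : Fin 7) (h : a.val + 1 = b.val) : (pathGraph 7).Adj a b := by
  rw [pathGraph_adj]; left; exact h

lemma two_step {χ : Sym2 (Fin 7) → ℕ}
    (hχ : IsCubicalLabelling (SimpleGraph.pathGraph 7) χ)
    (a b c : Fin 7) (hab : (pathGraph 7).Adj a b) (hbc : (pathGraph 7).Adj b c)
    (hac : a ≠ c) : χ s(a,b) ≠ χ s(b,c) := by
  intro heq
  obtain ⟨c', hc'⟩ := hχ.2 a c (Walk.cons hab (Walk.cons hbc Walk.nil)) (by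
    rw [Walk.isPath_def]
    simp [Walk.support_cons, List.nodup_cons, hab.ne, hbc.ne, hac]) (by simp)
  simp [Walk.edges_cons, List.count_cons, heq] at hc'
  split_ifs at hc' <;> simp_all [Nat.odd_iff]


lemma dist2 {χ : Sym2 (Fin 7) → ℕ}
    (hχ : IsLayeredLabelling (SimpleGraph.pathGraph 7) χ)
    (a b c d : Fin 7) (hab : (pathGraph 7).Adj a b) (hbc : (pathGraph 7).Adj b c)
    (hcd : (pathGraph 7).Adj c d) (hlbl : χ s(b,c) ≠ χ s(a,b)) :
    χ s(a,b) ≠ χ s(c,d) := by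
  intro heq
  have hev := hχ.2 s(a,b) ((SimpleGraph.mem_edgeSet _).2 hab) s(c,d)
    ((SimpleGraph.mem_edgeSet _).2 hcd) heq b c (by simp) (by simp)
    (Walk.cons hbc Walk.nil)
    (by rw [Walk.isPath_def]; simp [hbc.ne])
    (by simpa using hlbl)
  simp at hev

/-- In any layered edge-labelling of `P6` there are four consecutive
edges with pairwise distinct labels. -/
theorem p6_layered_labelling_four_distinct (χ : Sym2 (Fin 7) → ℕ)
    (hχ : IsLayeredLabelling (SimpleGraph.pathGraph 7) χ) :
    ∃ i : ℕ, i ≤ 2 ∧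
      [χ s(((i : ℕ) : Fin 7), ((i + 1 : ℕ) : Fin 7)),
       χ s(((i + 1 : ℕ) : Fin 7), ((i + 2 : ℕ) : Fin 7)),
       χ s(((i + 2 : ℕ) : Fin 7), ((i + 3 : ℕ) : Fin 7)),
       χ s(((i + 3 : ℕ) : Fin 7), ((i + 4 : ℕ) : Fin 7))].Pairwise (· ≠ ·) := by
  have h01 : (pathGraph 7).Adj 0 1 := adj7 _ _ (by decide)
  have h12 : (pathGraph 7).Adj 1 2 := adj7 _ _ (by decide)
  have h23 : (pathGraph 7).Adj 2 3 := adj7 _ _ (by decide)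
  have h34 : (pathGraph 7).Adj 3 4 := adj7 _ _ (by decide)
  have h45 : (pathGraph 7).Adj 4 5 := adj7 _ _ (by decide)
  have h56 : (pathGraph 7).Adj 5 6 := adj7 _ _ (by decide)
  have n0 : χ s(0,1) ≠ χ s(1,2) := two_step hχ.1 0 1 2 h01 h12 (by decide)
  have n1 : χ s(1,2) ≠ χ s(2,3) := two_step hχ.1 1 2 3 h12 h23 (by decide)
  have n2 : χ s(2,3) ≠ χ s(3,4) := two_step hχ.1 2 3 4 h23 h34 (by decide)
  have n3 : χ s(3,4) ≠ χ s(4,5) := two_step hχ.1 3 4 5 h34 h45 (by decide)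
  have n4 : χ s(4,5) ≠ χ s(5,6) := two_step hχ.1 4 5 6 h45 h56 (by decide)
  have d0 : χ s(0,1) ≠ χ s(2,3) := dist2 hχ 0 1 2 3 h01 h12 h23 n0.symm
  have d1 : χ s(1,2) ≠ χ s(3,4) := dist2 hχ 1 2 3 4 h12 h23 h34 n1.symm
  have d2 : χ s(2,3) ≠ χ s(4,5) := dist2 hχ 2 3 4 5 h23 h34 h45 n2.symm
  have d3 : χ s(3,4) ≠ χ s(5,6) := dist2 hχ 3 4 5 6 h34 h45 h56 n3.symm
  by_contra hcon
  push_neg at hcon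
  have e0 := hcon 0 (by norm_num)
  have e1 := hcon 1 (by norm_num)
  have e2 := hcon 2 (by norm_num)
  norm_num [List.pairwise_cons] at e0 e1 e2
  have q0 : χ s(0,1) = χ s(3,4) := by tauto
  have q1 : χ s(1,2) = χ s(4,5) := by tauto
  have q2 : χ s(2,3) = χ s(5,6) := by tauto
  obtain ⟨c', hc'⟩ := hχ.1.2 0 6
    (Walk.cons h01 (Walk.cons h12 (Walk.cons h23 (Walk.cons h34
      (Walk.cons h45 (Walk.cons h56 Walk.nil))))))
    (by rw [Walk.isPath_def]; simp [Walk.support_cons]) (by simp)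
  simp only [Walk.edges_cons, Walk.edges_nil, List.map_cons, List.map_nil] at hc'
  rw [q0, q1, q2] at hc'
  simp only [List.count_cons, List.count_nil] at hc'
  rcases hc' with ⟨k, hk⟩
  split_ifs at hk <;> omega
end
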